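/- For every m ≥ 0, the following identity holds in ℚ⟦t,u,z⟧: Σ_{k≥0} (u-1)^{m+1}·(1-zt)^{m+1}·u^k·(1-t)^{k(m+1)}·Π_{i=1}^{k+1} γ_i^{-1} = -Σ_{j=0}^{m} (u-1)^j·(1-zt)^j·u^{m-j}·Π_{i=j+1}^{m} (1 - (1-t)^i), where the infinite sum on the left converges in the formal power series topology. -/

import Mathlib

/-!
STATEMENT 10: For every m ≥ 0, in ℚ⟦t,u,z⟧:
Σ_{k≥0} (u-1)^{m+1}·(1-zt)^{m+1}·u^k·(1-t)^{k(m+1)}·Π_{i=1}^{k+1} γ_i⁻¹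
  = -Σ_{j=0}^{m} (u-1)^j·(1-zt)^j·u^{m-j}·Π_{i=j+1}^{m} (1 - (1-t)^i),
the infinite sum on the left converging in the formal power series topology.
-/

/-- `HasPSSum f S` : the (possibly infinite) family `f` of formal power series is
summable in the formal power series topology (coefficientwise, only finitely many
terms contribute to each coefficient) and its sum is `S`. -/
def HasPSSum {ι : Type*} {σ : Type*} (f : ι → MvPowerSeries σ ℚ) (S : MvPowerSeries σ ℚ) : Prop :=
  ∀ e : σ →₀ ℕ, ∃ A : Finset ι, (∀ i ∉ A, MvPowerSeries.coeff e (f i) = 0) ∧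
    MvPowerSeries.coeff e S = ∑ i ∈ A, MvPowerSeries.coeff e (f i)

open MvPowerSeries

/-- The variable `t` in `ℚ⟦t,u,z⟧`. -/
noncomputable def T : MvPowerSeries (Fin 3) ℚ := X 0
/-- The variable `u` in `ℚ⟦t,u,z⟧`. -/
noncomputable def U : MvPowerSeries (Fin 3) ℚ := X 1
/-- The variable `z` in `ℚ⟦t,u,z⟧`. -/
noncomputable def Z : MvPowerSeries (Fin 3) ℚ := X 2

/-- `γ_0 = 1` and `γ_k = u - (1-zt)(1-t)^{k-1} (u-1)` for `k ≥ 1`. -/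
noncomputable def gammaS : ℕ → MvPowerSeries (Fin 3) ℚ
  | 0 => 1
  | k + 1 => U - (1 - Z * T) * (1 - T) ^ k * (U - 1)

/-! ### Auxiliary definitions for the proof -/

/-- `P_k = ∏_{i=1}^{k} γ_i⁻¹`. -/
noncomputable def PP (k : ℕ) : MvPowerSeries (Fin 3) ℚ := ∏ i ∈ Finset.Icc 1 k, (gammaS i)⁻¹
/-- The general term of the infinite sum. -/
noncomputable def aT (m k : ℕ) : MvPowerSeries (Fin 3) ℚ :=
  (U - 1) ^ (m + 1) * (1 - Z * T) ^ (m + 1) * U ^ k * (1 - T) ^ (k * (m + 1)) *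
    ∏ i ∈ Finset.Icc 1 (k + 1), (gammaS i)⁻¹
/-- `c = (u-1)(1-zt)`. -/
noncomputable def cC : MvPowerSeries (Fin 3) ℚ := (U - 1) * (1 - Z * T)
/-- `T^{(m)}_k = c^m u^k (1-t)^{km} P_k`. -/
noncomputable def Tm (m k : ℕ) : MvPowerSeries (Fin 3) ℚ :=
  cC ^ m * U ^ k * (1 - T) ^ (k * m) * PP k
/-- Partial sums. -/
noncomputable def Sm (m N : ℕ) : MvPowerSeries (Fin 3) ℚ := ∑ k ∈ Finset.range N, aT m k
/-- The closed form (right-hand side). -/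
noncomputable def Qm (m : ℕ) : MvPowerSeries (Fin 3) ℚ :=
  -(∑ j ∈ Finset.range (m + 1),
      (U - 1) ^ j * (1 - Z * T) ^ j * U ^ (m - j) *
        ∏ i ∈ Finset.Ico (j + 1) (m + 1), (1 - (1 - T) ^ i))

lemma gamma_const (k : ℕ) : constantCoeff (gammaS (k+1)) = 1 := by
  simp [gammaS, T, U, Z]

lemma PP_succ (k : ℕ) : gammaS (k+1) * PP (k+1) = PP k := by
  rw [PP, PP, Finset.prod_Icc_succ_top (Nat.le_add_left 1 k), ← mul_assoc,
    mul_comm (gammaS (k+1)), mul_assoc,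
    MvPowerSeries.mul_inv_cancel _ (h := by rw [gamma_const]; exact one_ne_zero), mul_one]

lemma K1 (m k : ℕ) : (1-T)^m * aT m k = Tm m (k+1) - (1-T)^m * Tm m k := by
  rw [aT, Tm, Tm, ← PP_succ k, ← PP, cC]
  simp only [gammaS, mul_pow]
  ring

lemma linkL (m k : ℕ) : Tm (m+1) (k+1) = U * (1-T)^(m+1) * aT m k := by
  rw [aT, Tm, ← PP, cC]
  simp only [mul_pow]
  ring

lemma Tm_zero_right (m : ℕ) : Tm m 0 = cC ^ m := by
  simp [Tm, PP]

lemma K2 (m n : ℕ) :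
    (1-T)^(m+1) * Sm (m+1) (n+1) =
      (1 - (1-T)^(m+1)) * (U * (1-T)^(m+1) * Sm m n) + Tm (m+1) (n+1) - (1-T)^(m+1) * cC^(m+1) := by
  have h1 : (1-T)^(m+1) * Sm (m+1) (n+1)
      = ∑ k ∈ Finset.range (n+1), (Tm (m+1) (k+1) - (1-T)^(m+1) * Tm (m+1) k) := by
    rw [Sm, Finset.mul_sum]
    exact Finset.sum_congr rfl fun k _ => K1 (m+1) k
  rw [h1, Finset.sum_sub_distrib, ← Finset.mul_sum, Finset.sum_range_succ,
    Finset.sum_range_succ' (fun k => Tm (m+1) k) n]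
  have h2 : ∑ k ∈ Finset.range n, Tm (m+1) (k+1) = U * (1-T)^(m+1) * Sm m n := by
    rw [Sm, Finset.mul_sum]
    exact Finset.sum_congr rfl fun k _ => linkL m k
  rw [h2, Tm_zero_right]
  ring

lemma Q_rec (m : ℕ) : Qm (m+1) = (1 - (1-T)^(m+1)) * U * Qm m - cC^(m+1) := by
  rw [Qm, Qm, Finset.sum_range_succ]
  have h : ∀ j ∈ Finset.range (m+1),
      (U - 1) ^ j * (1 - Z * T) ^ j * U ^ (m + 1 - j) *
        ∏ i ∈ Finset.Ico (j + 1) (m + 1 + 1), (1 - (1 - T) ^ i)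
      = (1 - (1-T)^(m+1)) * U * ((U - 1) ^ j * (1 - Z * T) ^ j * U ^ (m - j) *
        ∏ i ∈ Finset.Ico (j + 1) (m + 1), (1 - (1 - T) ^ i)) := by
    intro j hj
    rw [Finset.mem_range] at hj
    have hju : m + 1 - j = (m - j) + 1 := by omega
    rw [hju, Finset.prod_Ico_succ_top (by omega), pow_succ]
    ring
  rw [Finset.sum_congr rfl h, ← Finset.mul_sum]
  have : m + 1 - (m + 1) = 0 := by omega
  rw [this]
  simp only [pow_zero, mul_one, Finset.Ico_self, Finset.prod_empty, cC, mul_pow]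
  ring

lemma MAIN (m : ℕ) : ∀ N : ℕ, ∃ R, Sm m (m + N) = Qm m + U ^ N * R := by
  induction m with
  | zero =>
    intro N
    refine ⟨PP N, ?_⟩
    have h0 : Sm 0 N = Tm 0 N - Tm 0 0 := by
      rw [Sm]
      have : ∀ k, aT 0 k = Tm 0 (k+1) - Tm 0 k := by
        intro k
        have := K1 0 k
        simpa using this
      rw [Finset.sum_congr rfl fun k _ => this k]
      exact Finset.sum_range_sub (fun k => Tm 0 k) N
    have hQ : Qm 0 = -1 := by simp [Qm]
    rw [Nat.zero_add, h0, hQ, Tm_zero_right, Tm]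
    ring
  | succ m ih =>
    intro N
    obtain ⟨R, hR⟩ := ih N
    have key := K2 m (m + N)
    have harr : m + 1 + N = m + N + 1 := by omega
    rw [harr]
    rw [hR] at key
    set w : MvPowerSeries (Fin 3) ℚ := (1-T)^(m+1) with hw
    have hwc : constantCoeff w ≠ 0 := by
      simp [hw, T]
    have key2 : w * Sm (m+1) (m + N + 1)
        = w * Qm (m+1) + U ^ N * ((1 - w) * (U * w * R) + cC^(m+1) * U^(m+1) * (1-T)^((m+N+1)*(m+1)) * PP (m+N+1)) := by
      rw [key, Q_rec, Tm]
      ring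
    refine ⟨w⁻¹ * ((1 - w) * (U * w * R) + cC^(m+1) * U^(m+1) * (1-T)^((m+N+1)*(m+1)) * PP (m+N+1)), ?_⟩
    have hcancel : w⁻¹ * w = 1 := MvPowerSeries.inv_mul_cancel _ hwc
    calc Sm (m+1) (m + N + 1) = w⁻¹ * (w * Sm (m+1) (m + N + 1)) := by
          rw [← mul_assoc, hcancel, one_mul]
      _ = w⁻¹ * (w * Qm (m+1) + U ^ N * ((1 - w) * (U * w * R) + cC^(m+1) * U^(m+1) * (1-T)^((m+N+1)*(m+1)) * PP (m+N+1))) := by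
          rw [key2]
      _ = _ := by rw [mul_add, ← mul_assoc, hcancel, one_mul]; ring

lemma coeff_aT_zero (m k : ℕ) (e : Fin 3 →₀ ℕ) (h : e 1 < k) :
    MvPowerSeries.coeff e (aT m k) = 0 := by
  refine MvPowerSeries.X_pow_dvd_iff.mp ?_ e h
  refine ⟨(U - 1) ^ (m + 1) * (1 - Z * T) ^ (m + 1) * (1 - T) ^ (k * (m + 1)) *
    ∏ i ∈ Finset.Icc 1 (k + 1), (gammaS i)⁻¹, ?_⟩
  rw [aT, U]
  ring

theorem psi_eq_polynomial (m : ℕ) :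
    HasPSSum (fun k : ℕ =>
      (U - 1) ^ (m + 1) * (1 - Z * T) ^ (m + 1) * U ^ k * (1 - T) ^ (k * (m + 1)) *
        ∏ i ∈ Finset.Icc 1 (k + 1), (gammaS i)⁻¹)
      (-(∑ j ∈ Finset.range (m + 1),
        (U - 1) ^ j * (1 - Z * T) ^ j * U ^ (m - j) *
          ∏ i ∈ Finset.Ico (j + 1) (m + 1), (1 - (1 - T) ^ i))) := by
  intro e
  refine ⟨Finset.range (m + e 1 + 1), ?_, ?_⟩
  · intro k hk
    rw [Finset.mem_range, not_lt] at hk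
    exact coeff_aT_zero m k e (by omega)
  · obtain ⟨R, hR⟩ := MAIN m (e 1 + 1)
    have hz : MvPowerSeries.coeff e ((X 1 : MvPowerSeries (Fin 3) ℚ) ^ (e 1 + 1) * R) = 0 :=
      MvPowerSeries.X_pow_dvd_iff.mp ⟨R, rfl⟩ e (Nat.lt_succ_self _)
    have h1 : Qm m = Sm m (m + e 1 + 1) - U ^ (e 1 + 1) * R := by
      rw [show m + e 1 + 1 = m + (e 1 + 1) from by omega, hR]; ring
    show MvPowerSeries.coeff e (Qm m)
      = ∑ i ∈ Finset.range (m + e 1 + 1), MvPowerSeries.coeff e (aT m i)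
    rw [h1, U, map_sub, hz, sub_zero, Sm, map_sum]
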